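/- Let (R, m) be an Artinian local ring and M a finitely generated R-module with no nonzero free direct summand. Then the image of any R-linear map from M to a free R-module F is contained in mF, and consequently the positive-degree part of the Rees algebra R(M) is a nilpotent ideal. -/

import Mathlib

noncomputable section

open TensorAlgebra in
/-- The relation defining the symmetric algebra as a quotient of the tensor algebra. -/
inductive SymRel (R : Type*) [CommRing R] (M : Type*) [AddCommGroup M] [Module R M] :
    TensorAlgebra R M → TensorAlgebra R M → Prop
  | mul_comm (x y : M) : SymRel R M (ι R x * ι R y) (ι R y * ι R x)

/-- The symmetric algebra of a module. -/
abbrev SymmAlg (R : Type*) [CommRing R] (M : Type*) [AddCommGroup M] [Module R M] :=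
  RingQuot (SymRel R M)

variable (R : Type*) [CommRing R] {M N : Type*} [AddCommGroup M] [Module R M]
  [AddCommGroup N] [Module R N]

/-- The canonical inclusion of `M` in degree one of its symmetric algebra. -/
def SymmAlg.ι : M →ₗ[R] SymmAlg R M :=
  (RingQuot.mkAlgHom R (SymRel R M)).toLinearMap ∘ₗ TensorAlgebra.ι R

instance : CommRing (SymmAlg R M) :=
  { (inferInstance : Ring (SymmAlg R M)) with
    mul_comm := by
      have key : ∀ x y : TensorAlgebra R M,
          RingQuot.mkAlgHom R (SymRel R M) x * RingQuot.mkAlgHom R (SymRel R M) y =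
          RingQuot.mkAlgHom R (SymRel R M) y * RingQuot.mkAlgHom R (SymRel R M) x := by
        intro x y
        induction x using TensorAlgebra.induction with
        | algebraMap r => simp [Algebra.commutes]
        | ι m =>
          induction y using TensorAlgebra.induction with
          | algebraMap r => simp [Algebra.commutes]
          | ι m' =>
            have h := RingQuot.mkAlgHom_rel R (SymRel.mul_comm (R := R) m m')
            simpa only [map_mul] using h
          | add a b ha hb => simp only [map_add, add_mul, mul_add, ha, hb]
          | mul a b ha hb =>
            simp only [map_mul, ← mul_assoc, ha]
            rw [mul_assoc _ _ (RingQuot.mkAlgHom R (SymRel R M) b), hb, mul_assoc]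
        | add a b ha hb => simp only [map_add, add_mul, mul_add, ha, hb]
        | mul a b ha hb =>
          simp only [map_mul, mul_assoc, hb]
          rw [← mul_assoc, ha, mul_assoc]
      intro a b
      obtain ⟨x, rfl⟩ := RingQuot.mkAlgHom_surjective R (SymRel R M) a
      obtain ⟨y, rfl⟩ := RingQuot.mkAlgHom_surjective R (SymRel R M) b
      exact key x y }

theorem SymmAlg.ι_mul_comm (x y : M) :
    SymmAlg.ι R x * SymmAlg.ι R y = SymmAlg.ι R y * SymmAlg.ι R x := mul_comm _ _

/-- Functoriality of the symmetric algebra. -/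
def SymmAlg.map (f : M →ₗ[R] N) : SymmAlg R M →ₐ[R] SymmAlg R N :=
  RingQuot.liftAlgHom R ⟨TensorAlgebra.lift R ((SymmAlg.ι R).comp f), by
    intro x y h
    cases h with
    | mul_comm a b => simp [mul_comm]⟩

universe w
/-- A map to a free module is versal if every map to a free module factors through it. -/
def IsVersal {R : Type*} [CommRing R] {M F : Type*} [AddCommGroup M] [Module R M]
    [AddCommGroup F] [Module R F] (f : M →ₗ[R] F) : Prop :=
  ∀ (G : Type w) [AddCommGroup G] [Module R G] [Module.Free R G] (g : M →ₗ[R] G),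
    ∃ h : F →ₗ[R] G, h ∘ₗ f = g

/-- `M` has no (nonzero) free direct summand. -/
def HasNoFreeSummand (R : Type*) [CommRing R] (M : Type*) [AddCommGroup M] [Module R M] :
    Prop :=
  ¬ ∃ (N N' : Submodule R M), IsCompl N N' ∧ Nonempty (N ≃ₗ[R] R)

set_option maxHeartbeats 1000000
set_option synthInstance.maxHeartbeats 400000


theorem list_prod_mem_pow {A : Type*} [CommRing A] (J : Ideal A) :
    ∀ (l : List A), (∀ x ∈ l, x ∈ J) → l.prod ∈ J ^ l.length := by
  intro l
  induction l with
  | nil => intro _; simp [Ideal.one_eq_top]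
  | cons a t ih =>
    intro h
    simp only [List.prod_cons, List.length_cons, pow_succ]
    rw [mul_comm (J ^ t.length) J]
    exact Ideal.mul_mem_mul (h a List.mem_cons_self) (ih fun x hx => h x (List.mem_cons_of_mem a hx))

theorem range_le_smul_aux {R : Type*} [CommRing R] [IsLocalRing R] {M : Type*}
    [AddCommGroup M] [Module R M] (hM : HasNoFreeSummand R M)
    (F : Type*) [AddCommGroup F] [Module R F] [Module.Free R F] (φ : M →ₗ[R] F) :
    LinearMap.range φ ≤ (IsLocalRing.maximalIdeal R) • (⊤ : Submodule R F) := by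
  rintro _ ⟨x, rfl⟩
  by_contra hx
  set b := Module.Free.chooseBasis R F with hb
  have hex : ∃ i, b.repr (φ x) i ∉ IsLocalRing.maximalIdeal R := by
    by_contra h
    push_neg at h
    apply hx
    rw [← b.linearCombination_repr (φ x), Finsupp.linearCombination_apply, Finsupp.sum]
    exact Submodule.sum_mem _ fun i _ => Submodule.smul_mem_smul (h i) trivial
  obtain ⟨i, hi⟩ := hex
  have hu : IsUnit (b.repr (φ x) i) := by
    by_contra h
    exact hi ((IsLocalRing.mem_maximalIdeal _).2 h)
  set g : M →ₗ[R] R := (b.coord i).comp φ with hg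
  set s : R →ₗ[R] M := LinearMap.toSpanSingleton R M ((↑hu.unit⁻¹ : R) • x) with hs
  have hgs : ∀ c, g (s c) = c := by
    intro c
    simp only [hs, hg, LinearMap.toSpanSingleton_apply, LinearMap.comp_apply, map_smul,
      Module.Basis.coord_apply, smul_eq_mul]
    rw [IsUnit.val_inv_mul, mul_one]
  apply hM
  refine ⟨LinearMap.range s, LinearMap.ker g, ⟨?_, ?_⟩, ?_⟩
  · rw [Submodule.disjoint_def]
    rintro _ ⟨c, rfl⟩ hker
    rw [LinearMap.mem_ker, hgs] at hker
    rw [hker, map_zero]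
  · rw [codisjoint_iff, eq_top_iff]
    intro y _
    refine Submodule.mem_sup.2 ⟨s (g y), ⟨g y, rfl⟩, y - s (g y), ?_, by abel⟩
    rw [LinearMap.mem_ker, map_sub, hgs, sub_self]
  · have hinj : Function.Injective s := by
      intro a b hab
      have := congrArg g hab
      rwa [hgs, hgs] at this
    exact ⟨(LinearEquiv.ofInjective s hinj).symm⟩

/-- Over an Artinian local ring, if `M` has no free direct summand then the image of every map
from `M` to a free module `F` lies in `m•F`, and the positive-degree part of the Rees algebra
of `M` (the ideal generated by the degree one part of the image of `Sym` of a versal map) is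
nilpotent. -/
theorem range_le_smul_and_posPart_nilpotent {R : Type*} [CommRing R] [IsArtinianRing R]
    [IsLocalRing R] {M : Type*} [AddCommGroup M] [Module R M] [Module.Finite R M]
    (hM : HasNoFreeSummand R M) :
    (∀ (F : Type*) [AddCommGroup F] [Module R F] [Module.Free R F] (φ : M →ₗ[R] F),
        LinearMap.range φ ≤ (IsLocalRing.maximalIdeal R) • (⊤ : Submodule R F)) ∧
      ∀ (F : Type*) [AddCommGroup F] [Module R F] [Module.Free R F] (f : M →ₗ[R] F),
        IsVersal f →
        IsNilpotent (Ideal.span (Set.range fun m : M =>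
          (⟨SymmAlg.map R f (SymmAlg.ι R m), ⟨SymmAlg.ι R m, rfl⟩⟩ :
            ↥(SymmAlg.map R f).range))) := by
  refine ⟨fun F _ _ _ φ => range_le_smul_aux hM F φ, ?_⟩
  intro F _ _ _ f _
  obtain ⟨n, hn⟩ : IsNilpotent (IsLocalRing.maximalIdeal R) := by
    rw [← IsLocalRing.jacobson_eq_maximalIdeal (⊥ : Ideal R) bot_ne_top]
    exact IsArtinianRing.isNilpotent_jacobson_bot
  refine ⟨n, ?_⟩
  rw [Ideal.span, Submodule.span_pow, Submodule.zero_eq_bot, Submodule.span_eq_bot]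
  intro x hx
  obtain ⟨c, hc⟩ := Set.mem_pow.1 hx
  set J : Ideal (SymmAlg R F) := (IsLocalRing.maximalIdeal R).map (algebraMap R (SymmAlg R F))
    with hJ
  have hJn : J ^ n = ⊥ := by
    rw [hJ, ← Ideal.map_pow, hn, Submodule.zero_eq_bot, Ideal.map_bot]
  have hgen : ∀ m : M, (SymmAlg.map R f (SymmAlg.ι R m) : SymmAlg R F) ∈ J := by
    intro m
    have h1 : f m ∈ (IsLocalRing.maximalIdeal R) • (⊤ : Submodule R F) :=
      range_le_smul_aux hM F f ⟨m, rfl⟩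
    have h2 : SymmAlg.ι R (f m) ∈
        (IsLocalRing.maximalIdeal R) • (⊤ : Submodule R (SymmAlg R F)) := by
      have h3 := Submodule.mem_map_of_mem (f := SymmAlg.ι R) h1
      rw [Submodule.map_smul''] at h3
      exact Submodule.smul_le.2 (fun r hr y _ => Submodule.smul_mem_smul hr (Submodule.mem_top (R := R))) h3
    rw [Ideal.smul_top_eq_map] at h2
    have h4 : SymmAlg.map R f (SymmAlg.ι R m) = SymmAlg.ι R (f m) := by
      simp [SymmAlg.map, SymmAlg.ι, RingQuot.liftAlgHom_mkAlgHom_apply]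
    rw [h4]
    exact h2
  have hval : ((SymmAlg.map R f).range).val x =
      ((List.ofFn fun i => ((c i : ↑(SymmAlg.map R f).range) : SymmAlg R F))).prod := by
    rw [← hc, map_list_prod]
    congr 1
    rw [List.map_ofFn]
    rfl
  have hmem : ((List.ofFn fun i => ((c i : ↑(SymmAlg.map R f).range) : SymmAlg R F))).prod
      ∈ J ^ n := by
    have hp := list_prod_mem_pow J
      (List.ofFn fun i => ((c i : ↑(SymmAlg.map R f).range) : SymmAlg R F)) ?_
    · simpa using hp
    · intro y hy
      simp only [List.mem_ofFn, Set.mem_range] at hy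
      obtain ⟨i, rfl⟩ := hy
      obtain ⟨mi, hmi⟩ := (c i).2
      have hco : ((c i : ↑(SymmAlg.map R f).range) : SymmAlg R F) =
          SymmAlg.map R f (SymmAlg.ι R mi) := by
        rw [← hmi]
      show ((c i : ↑(SymmAlg.map R f).range) : SymmAlg R F) ∈ J
      rw [hco]
      exact hgen mi
  rw [hJn] at hmem
  have hz : ((SymmAlg.map R f).range).val x = 0 := by rw [hval]; exact hmem
  exact Subtype.ext hz
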